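/- Scaled variance domination under the sample-size condition: if for all k, t, s: sqrt(η̄_t/η̲_t) (Σ_a π^(k)_t(a|s) sqrt(ĥq_{π^(k),t}(s,a)))² − (1 − n_k/n) Δ^(k)_t(s) ≤ Σ_a π^(k)_t(a|s) ĥq_{π^(k),t}(s,a), where Δ^(k)_t(s) = E_{A~ĥμ_t(·|s)}[(ρ^{π^(k),ĥμ}_t)² ν_{π^(k),t}(s,A)] + V_{A~ĥμ_t(·|s)}(ρ^{π^(k),ĥμ}_t q_{π^(k),t}(s,A)), then for every k, t, s: (n_k/n) V(G^PDIS_k(τ^{ĥμ_{t:T−1}}_{t:T−1}) | S_t = s) ≤ V(G^PDIS_k(τ^{π^(k)_{t:T−1}}_{t:T−1}) | S_t = s). -/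

import Mathlib

open Finset

section RL

variable {S A : Type*}

/-- Expectation, over the random trajectory of length `h` generated from time `t` and state `s`
by the behavior policy `μ` in the MDP with transition kernel `p`, of a functional `f` of the
trajectory (recorded as the list of successive (action, next-state) pairs).  This is the finite
sum over all trajectories weighted by their probabilities; trajectories of zero probability
contribute `0`. -/
noncomputable def Etraj [Fintype S] [Fintype A] (p : S → A → S → ℝ)
    (μ : ℕ → S → A → ℝ) : ℕ → ℕ → S → (List (A × S) → ℝ) → ℝ
  | 0, _, _, f => f []
  | h + 1, t, s, f =>
      ∑ a : A, ∑ s' : S,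
        μ t s a * p s a s' * Etraj p μ h (t + 1) s' (fun l => f ((a, s') :: l))

/-- Total (undiscounted) reward `Σ_i R_{i+1}` along a trajectory starting from state `s`. -/
noncomputable def retF (r : S → A → ℝ) : S → List (A × S) → ℝ
  | _, [] => 0
  | s, (a, s') :: l => r s a + retF r s' l

/-- The PDIS return `G^PDIS(τ^{μ_{t:T-1}}_{t:T-1}) = Σ_i (∏_{j=t}^i ρ^{π,μ}_j) R_{i+1}` of a
trajectory starting at time `t` in state `s`, with target policy `π` and behavior policy `μ`,
in its recursive form. -/
noncomputable def pdisF (r : S → A → ℝ) (π μ : ℕ → S → A → ℝ) :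
    ℕ → S → List (A × S) → ℝ
  | _, _, [] => 0
  | t, s, (a, s') :: l => π t s a / μ t s a * (r s a + pdisF r π μ (t + 1) s' l)

/-- State value function `v_{π,t}(s) = E_π[Σ_{i=t+1}^T R_i | S_t = s]` for horizon `T`. -/
noncomputable def vval [Fintype S] [Fintype A] (p : S → A → S → ℝ) (r : S → A → ℝ)
    (π : ℕ → S → A → ℝ) (T t : ℕ) (s : S) : ℝ :=
  Etraj p π (T - t) t s (retF r s)

/-- Action value function `q_{π,t}(s,a) = E_π[Σ_{i=t+1}^T R_i | S_t = s, A_t = a]`. -/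
noncomputable def qval [Fintype S] [Fintype A] (p : S → A → S → ℝ) (r : S → A → ℝ)
    (π : ℕ → S → A → ℝ) (T t : ℕ) (s : S) (a : A) : ℝ :=
  r s a + ∑ s' : S, p s a s' * vval p r π T (t + 1) s'

/-- Conditional expectation `E[G^PDIS(τ^{μ_{t:T-1}}_{t:T-1}) | S_t = s]`. -/
noncomputable def Epdis [Fintype S] [Fintype A] (p : S → A → S → ℝ) (r : S → A → ℝ)
    (π μ : ℕ → S → A → ℝ) (T t : ℕ) (s : S) : ℝ :=
  Etraj p μ (T - t) t s (pdisF r π μ t s)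

/-- Conditional variance `V(G^PDIS(τ^{μ_{t:T-1}}_{t:T-1}) | S_t = s)`. -/
noncomputable def Vpdis [Fintype S] [Fintype A] (p : S → A → S → ℝ) (r : S → A → ℝ)
    (π μ : ℕ → S → A → ℝ) (T t : ℕ) (s : S) : ℝ :=
  Etraj p μ (T - t) t s (fun l => pdisF r π μ t s l ^ 2) - Epdis p r π μ T t s ^ 2

/-- `ν_{π,t}(s,a) = V_{S'~p(·|s,a)}(v_{π,t+1}(S'))` for `t ≤ T-2`, and `ν_{π,T-1}(s,a) = 0`. -/
noncomputable def nuval [Fintype S] [Fintype A] (p : S → A → S → ℝ) (r : S → A → ℝ)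
    (π : ℕ → S → A → ℝ) (T t : ℕ) (s : S) (a : A) : ℝ :=
  if t = T - 1 then 0
  else (∑ s' : S, p s a s' * vval p r π T (t + 1) s' ^ 2)
       - (∑ s' : S, p s a s' * vval p r π T (t + 1) s') ^ 2

/-- The variance-augmented action value `ĥq_{π,t}(s,a)`:
`ĥq_{π,T-1}(s,a) = q_{π,T-1}(s,a)²` and, for `t ≤ T-2`,
`ĥq_{π,t}(s,a) = q_{π,t}(s,a)² + ν_{π,t}(s,a) + Σ_{s'} p(s'|s,a) V(G^PDIS(τ^{π_{t+1:T-1}}) | S_{t+1}=s')`. -/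
noncomputable def hq [Fintype S] [Fintype A] (p : S → A → S → ℝ) (r : S → A → ℝ)
    (π : ℕ → S → A → ℝ) (T t : ℕ) (s : S) (a : A) : ℝ :=
  if t = T - 1 then qval p r π T t s a ^ 2
  else qval p r π T t s a ^ 2 + nuval p r π T t s a
       + ∑ s' : S, p s a s' * Vpdis p r π π T (t + 1) s'

/-- The tailored behavior policy `ĥμ_t(a|s) ∝ sqrt(Σ_k π^(k)_t(a|s)² ĥq_{π^(k),t}(s,a))`,
normalized over `a ∈ 𝒜` (uniform on `𝒜` if all the weights vanish). -/
noncomputable def hmu [Fintype S] [Fintype A] (p : S → A → S → ℝ) (r : S → A → ℝ)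
    (K : ℕ) (π : Fin K → ℕ → S → A → ℝ) (T t : ℕ) (s : S) (a : A) : ℝ :=
  if (∑ b : A, Real.sqrt (∑ k : Fin K, π k t s b ^ 2 * hq p r (π k) T t s b)) = 0 then
    (Fintype.card A : ℝ)⁻¹
  else
    Real.sqrt (∑ k : Fin K, π k t s a ^ 2 * hq p r (π k) T t s a) /
      ∑ b : A, Real.sqrt (∑ k : Fin K, π k t s b ^ 2 * hq p r (π k) T t s b)

/-- `w^(k)_t(s,a) = π^(k)_t(a|s)² ĥq_{π^(k),t}(s,a)`. -/
noncomputable def wRL [Fintype S] [Fintype A] (p : S → A → S → ℝ) (r : S → A → ℝ)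
    (K : ℕ) (π : Fin K → ℕ → S → A → ℝ) (T : ℕ) (k : Fin K) (t : ℕ) (s : S) (a : A) : ℝ :=
  π k t s a ^ 2 * hq p r (π k) T t s a

/-- `η^(k)_t(s,a) = w^(k)_t(s,a) / w̄_t(s,a)` with `w̄_t(s,a) = (1/K) Σ_j w^(j)_t(s,a)`. -/
noncomputable def etaRL [Fintype S] [Fintype A] (p : S → A → S → ℝ) (r : S → A → ℝ)
    (K : ℕ) (π : Fin K → ℕ → S → A → ℝ) (T : ℕ) (k : Fin K) (t : ℕ) (s : S) (a : A) : ℝ :=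
  wRL p r K π T k t s a / ((∑ j : Fin K, wRL p r K π T j t s a) / K)

/-- `η̲_t = min_{k,s,a} η^(k)_t(s,a)`. -/
noncomputable def etaLoRL [Fintype S] [Fintype A] (p : S → A → S → ℝ) (r : S → A → ℝ)
    (K : ℕ) (π : Fin K → ℕ → S → A → ℝ) (T t : ℕ) : ℝ :=
  ⨅ x : Fin K × S × A, etaRL p r K π T x.1 t x.2.1 x.2.2

/-- `η̄_t = max_{k,s,a} η^(k)_t(s,a)`. -/
noncomputable def etaHiRL [Fintype S] [Fintype A] (p : S → A → S → ℝ) (r : S → A → ℝ)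
    (K : ℕ) (π : Fin K → ℕ → S → A → ℝ) (T t : ℕ) : ℝ :=
  ⨆ x : Fin K × S × A, etaRL p r K π T x.1 t x.2.1 x.2.2

end RL

section helpers
variable {S A : Type*} [Fintype S] [Fintype A]

lemma Etraj_add (p : S → A → S → ℝ) (μ : ℕ → S → A → ℝ) :
    ∀ (h t : ℕ) (s : S) (f g : List (A × S) → ℝ),
    Etraj p μ h t s (fun l => f l + g l) = Etraj p μ h t s f + Etraj p μ h t s g := by
  intro h
  induction h with
  | zero => intro t s f g; simp [Etraj]
  | succ h ih =>
    intro t s f g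
    simp only [Etraj]
    rw [← Finset.sum_add_distrib]
    refine Finset.sum_congr rfl fun a _ => ?_
    rw [← Finset.sum_add_distrib]
    refine Finset.sum_congr rfl fun s' _ => ?_
    rw [ih, mul_add]

lemma Etraj_mul (p : S → A → S → ℝ) (μ : ℕ → S → A → ℝ) (c : ℝ) :
    ∀ (h t : ℕ) (s : S) (f : List (A × S) → ℝ),
    Etraj p μ h t s (fun l => c * f l) = c * Etraj p μ h t s f := by
  intro h
  induction h with
  | zero => intro t s f; simp [Etraj]
  | succ h ih =>
    intro t s f
    simp only [Etraj]
    rw [Finset.mul_sum]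
    refine Finset.sum_congr rfl fun a _ => ?_
    rw [Finset.mul_sum]
    refine Finset.sum_congr rfl fun s' _ => ?_
    rw [ih]; ring

lemma Etraj_const (p : S → A → S → ℝ) (μ : ℕ → S → A → ℝ) (c : ℝ)
    (hp1 : ∀ s a, ∑ s' : S, p s a s' = 1) (N : ℕ)
    (hμ1 : ∀ i s, i < N → ∑ a : A, μ i s a = 1) :
    ∀ (h t : ℕ), t + h ≤ N → ∀ s : S, Etraj p μ h t s (fun _ => c) = c := by
  intro h
  induction h with
  | zero => intro t _ s; simp [Etraj]
  | succ h ih =>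
    intro t ht s
    simp only [Etraj]
    have : ∀ a : A, ∀ s' : S, Etraj p μ h (t+1) s' (fun _ => c) = c := by
      intro a s'; exact ih (t+1) (by omega) s'
    calc (∑ a : A, ∑ s' : S, μ t s a * p s a s' * Etraj p μ h (t + 1) s' (fun _ => c))
        = ∑ a : A, ∑ s' : S, μ t s a * p s a s' * c := by
          refine Finset.sum_congr rfl fun a _ => Finset.sum_congr rfl fun s' _ => ?_
          rw [this a s']
      _ = ∑ a : A, μ t s a * c := by
          refine Finset.sum_congr rfl fun a _ => ?_
          rw [← Finset.sum_mul, ← Finset.mul_sum, hp1]; ring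
      _ = c := by rw [← Finset.sum_mul, hμ1 t s (by omega), one_mul]

lemma Etraj_affine (p : S → A → S → ℝ) (μ : ℕ → S → A → ℝ) (b c : ℝ)
    (hp1 : ∀ s a, ∑ s' : S, p s a s' = 1) (N : ℕ)
    (hμ1 : ∀ i s, i < N → ∑ a : A, μ i s a = 1)
    (h t : ℕ) (ht : t + h ≤ N) (s : S) (f : List (A × S) → ℝ) :
    Etraj p μ h t s (fun l => c * (b + f l)) = c * (b + Etraj p μ h t s f) := by
  have e1 : (fun l : List (A × S) => c * (b + f l))
      = fun l => (fun _ => c * b) l + (fun l => c * f l) l := by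
    funext l; ring
  rw [e1, Etraj_add, Etraj_const p μ (c*b) hp1 N hμ1 h t ht, Etraj_mul]
  ring
end helpers

section helpers2
variable {S A : Type*} [Fintype S] [Fintype A]

lemma Etraj_pdis_eq (p : S → A → S → ℝ) (r : S → A → ℝ) (π μ : ℕ → S → A → ℝ)
    (hp1 : ∀ s a, ∑ s' : S, p s a s' = 1) (T : ℕ)
    (hμ1 : ∀ i s, i < T → ∑ a : A, μ i s a = 1)
    (hπ1 : ∀ i s, i < T → ∑ a : A, π i s a = 1)
    (hsupp : ∀ i s a, i < T → μ i s a = 0 → π i s a = 0) :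
    ∀ (h t : ℕ), t + h ≤ T → ∀ s : S,
      Etraj p μ h t s (pdisF r π μ t s) = Etraj p π h t s (retF r s) := by
  intro h
  induction h with
  | zero => intro t _ s; simp [Etraj, pdisF, retF]
  | succ h ih =>
    intro t ht s
    simp only [Etraj]
    refine Finset.sum_congr rfl fun a _ => Finset.sum_congr rfl fun s' _ => ?_
    have e1 : (fun l => pdisF r π μ t s ((a, s') :: l))
        = fun l => π t s a / μ t s a * (r s a + pdisF r π μ (t+1) s' l) := rfl
    have e2 : (fun l => retF r s ((a, s') :: l))
        = fun l => 1 * (r s a + retF r s' l) := by funext l; simp [retF]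
    rw [e1, e2, Etraj_affine p μ (r s a) _ hp1 T hμ1 h (t+1) (by omega) s',
      Etraj_affine p π (r s a) 1 hp1 T hπ1 h (t+1) (by omega) s',
      ih (t+1) (by omega) s', one_mul]
    set X := r s a + Etraj p π h (t + 1) s' (retF r s') with hX
    by_cases h0 : μ t s a = 0
    · rw [h0, hsupp t s a (by omega) h0]; ring
    · field_simp

lemma vval_top (p : S → A → S → ℝ) (r : S → A → ℝ) (π : ℕ → S → A → ℝ) (T : ℕ) (s : S) :
    vval p r π T T s = 0 := by
  simp [vval, Etraj, retF]

lemma Vpdis_top (p : S → A → S → ℝ) (r : S → A → ℝ) (π μ : ℕ → S → A → ℝ) (T : ℕ) (s : S) :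
    Vpdis p r π μ T T s = 0 := by
  simp [Vpdis, Epdis, Etraj, pdisF]

lemma Epdis_eq_vval (p : S → A → S → ℝ) (r : S → A → ℝ) (π μ : ℕ → S → A → ℝ)
    (hp1 : ∀ s a, ∑ s' : S, p s a s' = 1) (T : ℕ)
    (hμ1 : ∀ i s, i < T → ∑ a : A, μ i s a = 1)
    (hπ1 : ∀ i s, i < T → ∑ a : A, π i s a = 1)
    (hsupp : ∀ i s a, i < T → μ i s a = 0 → π i s a = 0)
    (t : ℕ) (ht : t ≤ T) (s : S) :
    Epdis p r π μ T t s = vval p r π T t s :=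
  Etraj_pdis_eq p r π μ hp1 T hμ1 hπ1 hsupp (T - t) t (by omega) s

lemma vval_eq_sum_q (p : S → A → S → ℝ) (r : S → A → ℝ) (π : ℕ → S → A → ℝ)
    (hp1 : ∀ s a, ∑ s' : S, p s a s' = 1) (T : ℕ)
    (hπ1 : ∀ i s, i < T → ∑ a : A, π i s a = 1)
    (t : ℕ) (ht : t < T) (s : S) :
    vval p r π T t s = ∑ a : A, π t s a * qval p r π T t s a := by
  have hh : T - t = (T - (t+1)) + 1 := by omega
  rw [vval, hh]
  simp only [Etraj]
  refine Finset.sum_congr rfl fun a _ => ?_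
  have e2 : ∀ s' : S, (fun l => retF r s ((a, s') :: l))
      = fun l => 1 * (r s a + retF r s' l) := by intro s'; funext l; simp [retF]
  calc (∑ s' : S, π t s a * p s a s' * Etraj p π (T - (t+1)) (t + 1) s'
          (fun l => retF r s ((a, s') :: l)))
      = ∑ s' : S, π t s a * p s a s' * (r s a + vval p r π T (t+1) s') := by
        refine Finset.sum_congr rfl fun s' _ => ?_
        rw [e2 s', Etraj_affine p π (r s a) 1 hp1 T hπ1 _ (t+1) (by omega) s', one_mul]
        rfl
    _ = π t s a * qval p r π T t s a := by
        rw [qval]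
        rw [show (∑ s' : S, π t s a * p s a s' * (r s a + vval p r π T (t+1) s'))
          = π t s a * ((∑ s' : S, p s a s' * r s a)
            + ∑ s' : S, p s a s' * vval p r π T (t+1) s') by
            rw [← Finset.sum_add_distrib, Finset.mul_sum]
            exact Finset.sum_congr rfl fun s' _ => by ring]
        rw [← Finset.sum_mul, hp1]; ring

lemma nuval_eq (p : S → A → S → ℝ) (r : S → A → ℝ) (π : ℕ → S → A → ℝ)
    (T t : ℕ) (ht : t < T) (s : S) (a : A) :
    nuval p r π T t s a = (∑ s' : S, p s a s' * vval p r π T (t + 1) s' ^ 2)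
       - (∑ s' : S, p s a s' * vval p r π T (t + 1) s') ^ 2 := by
  rw [nuval]
  split_ifs with h
  · have hT : t + 1 = T := by omega
    simp [hT, vval_top]
  · rfl

end helpers2

section helpers3
variable {S A : Type*} [Fintype S] [Fintype A]

lemma hq_eq (p : S → A → S → ℝ) (r : S → A → ℝ) (π : ℕ → S → A → ℝ)
    (T t : ℕ) (ht : t < T) (s : S) (a : A) :
    hq p r π T t s a = qval p r π T t s a ^ 2 + nuval p r π T t s a
      + ∑ s' : S, p s a s' * Vpdis p r π π T (t + 1) s' := by
  rw [hq]
  split_ifs with h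
  · have hT : t + 1 = T := by omega
    rw [hT]
    simp [nuval, h, Vpdis_top]
  · rfl

lemma sum_onpolicy (π : A → ℝ) (X : A → ℝ) :
    ∑ a : A, π a * (π a / π a) ^ 2 * X a = ∑ a : A, π a * X a := by
  refine Finset.sum_congr rfl fun a _ => ?_
  by_cases h : π a = 0
  · simp [h]
  · rw [div_self h]; ring

/-- The key one-step second-moment/variance recursion. -/
lemma Vpdis_rec (p : S → A → S → ℝ) (r : S → A → ℝ) (π μ : ℕ → S → A → ℝ)
    (hp1 : ∀ s a, ∑ s' : S, p s a s' = 1) (T : ℕ)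
    (hμ1 : ∀ i s, i < T → ∑ a : A, μ i s a = 1)
    (hπ1 : ∀ i s, i < T → ∑ a : A, π i s a = 1)
    (hsupp : ∀ i s a, i < T → μ i s a = 0 → π i s a = 0)
    (t : ℕ) (ht : t < T) (s : S) :
    Vpdis p r π μ T t s =
      (∑ a : A, μ t s a * (π t s a / μ t s a) ^ 2 *
        (qval p r π T t s a ^ 2 + nuval p r π T t s a
          + ∑ s' : S, p s a s' * Vpdis p r π μ T (t + 1) s'))
      - vval p r π T t s ^ 2 := by
  have hE : Epdis p r π μ T t s = vval p r π T t s :=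
    Epdis_eq_vval p r π μ hp1 T hμ1 hπ1 hsupp t (by omega) s
  have hE' : ∀ s' : S, Epdis p r π μ T (t+1) s' = vval p r π T (t+1) s' := fun s' =>
    Epdis_eq_vval p r π μ hp1 T hμ1 hπ1 hsupp (t+1) (by omega) s'
  rw [Vpdis, hE]
  have hh : T - t = (T - (t+1)) + 1 := by omega
  rw [hh]
  simp only [Etraj]
  congr 1
  refine Finset.sum_congr rfl fun a _ => ?_
  set h := T - (t+1) with hhdef
  -- expand inner expectations
  have step : ∀ s' : S,
      Etraj p μ h (t+1) s' (fun l => pdisF r π μ t s ((a, s') :: l) ^ 2)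
      = (π t s a / μ t s a)^2 * (r s a ^ 2
          + 2 * r s a * vval p r π T (t+1) s'
          + (Vpdis p r π μ T (t+1) s' + vval p r π T (t+1) s' ^ 2)) := by
    intro s'
    have e1 : (fun l => pdisF r π μ t s ((a, s') :: l) ^ 2)
        = fun l => ((π t s a / μ t s a)^2 * r s a ^ 2)
            + ((2 * (π t s a / μ t s a)^2 * r s a) * pdisF r π μ (t+1) s' l
               + (π t s a / μ t s a)^2 * (pdisF r π μ (t+1) s' l ^ 2)) := by
      funext l
      show (π t s a / μ t s a * (r s a + pdisF r π μ (t+1) s' l)) ^ 2 = _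
      ring
    rw [e1, Etraj_add, Etraj_add]
    simp only [Etraj_mul]
    rw [Etraj_const p μ _ hp1 T hμ1 h (t+1) (by omega) s']
    have hM : Etraj p μ h (t+1) s' (fun l => pdisF r π μ (t+1) s' l ^ 2)
        = Vpdis p r π μ T (t+1) s' + vval p r π T (t+1) s' ^ 2 := by
      have : Vpdis p r π μ T (t+1) s'
          = Etraj p μ (T - (t+1)) (t+1) s' (fun l => pdisF r π μ (t+1) s' l ^ 2)
            - Epdis p r π μ T (t+1) s' ^ 2 := rfl
      rw [← hhdef] at this
      rw [this, hE' s']; ring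
    have hEmean : Etraj p μ h (t+1) s' (pdisF r π μ (t+1) s')
        = vval p r π T (t+1) s' := by
      have := hE' s'
      rwa [Epdis, ← hhdef] at this
    rw [hM, hEmean]; ring
  calc (∑ s' : S, μ t s a * p s a s' *
          Etraj p μ h (t + 1) s' (fun l => pdisF r π μ t s ((a, s') :: l) ^ 2))
      = μ t s a * (π t s a / μ t s a)^2 * ∑ s' : S, p s a s' * (r s a ^ 2
          + 2 * r s a * vval p r π T (t+1) s'
          + (Vpdis p r π μ T (t+1) s' + vval p r π T (t+1) s' ^ 2)) := by
        rw [Finset.mul_sum]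
        refine Finset.sum_congr rfl fun s' _ => ?_
        rw [step s']; ring
    _ = μ t s a * (π t s a / μ t s a) ^ 2 *
        (qval p r π T t s a ^ 2 + nuval p r π T t s a
          + ∑ s' : S, p s a s' * Vpdis p r π μ T (t + 1) s') := by
        congr 1
        have expand : (∑ s' : S, p s a s' * (r s a ^ 2
            + 2 * r s a * vval p r π T (t+1) s'
            + (Vpdis p r π μ T (t+1) s' + vval p r π T (t+1) s' ^ 2)))
          = r s a ^ 2 * (∑ s' : S, p s a s')
            + 2 * r s a * (∑ s' : S, p s a s' * vval p r π T (t+1) s')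
            + (∑ s' : S, p s a s' * Vpdis p r π μ T (t+1) s')
            + (∑ s' : S, p s a s' * vval p r π T (t+1) s' ^ 2) := by
          rw [Finset.mul_sum, Finset.mul_sum, ← Finset.sum_add_distrib,
            ← Finset.sum_add_distrib, ← Finset.sum_add_distrib]
          exact Finset.sum_congr rfl fun s' _ => by ring
        rw [expand, hp1, qval, nuval_eq p r π T t ht s a]
        ring
end helpers3


/-- `Δ^(k)_t(s) = E_{A~ĥμ_t(·|s)}[(ρ^{π^(k),ĥμ}_t)² ν_{π^(k),t}(s,A)]
  + V_{A~ĥμ_t(·|s)}(ρ^{π^(k),ĥμ}_t q_{π^(k),t}(s,A))`. -/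
noncomputable def DeltaRL {S A : Type*} [Fintype S] [Fintype A]
    (p : S → A → S → ℝ) (r : S → A → ℝ)
    (K : ℕ) (π : Fin K → ℕ → S → A → ℝ) (T : ℕ) (k : Fin K) (t : ℕ) (s : S) : ℝ :=
  (∑ a : A, hmu p r K π T t s a *
      ((π k t s a / hmu p r K π T t s a) ^ 2 * nuval p r (π k) T t s a))
  + ((∑ a : A, hmu p r K π T t s a *
        (π k t s a / hmu p r K π T t s a * qval p r (π k) T t s a) ^ 2)
     - (∑ a : A, hmu p r K π T t s a *
        (π k t s a / hmu p r K π T t s a * qval p r (π k) T t s a)) ^ 2)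

/-- scaled variance domination under the sample-size condition: under the
similarity condition with sample sizes, for every `k`, `t ∈ {0,…,T-1}` and state `s`,
`(n_k/n) V(G^PDIS_k(τ^{ĥμ_{t:T-1}}) | S_t = s) ≤ V(G^PDIS_k(τ^{π^(k)_{t:T-1}}) | S_t = s)`. -/
theorem stmt15 {S A : Type*} [Fintype S] [Fintype A] [Nonempty S] [Nonempty A]
    (p : S → A → S → ℝ) (r : S → A → ℝ)
    (hp0 : ∀ s a s', 0 ≤ p s a s') (hp1 : ∀ s a, ∑ s' : S, p s a s' = 1)
    (T : ℕ) (hT : 1 ≤ T)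
    (K : ℕ) (hK : 0 < K) (π : Fin K → ℕ → S → A → ℝ)
    (hπ : ∀ k t s, t < T → (∀ a, 0 ≤ π k t s a) ∧ (∑ a : A, π k t s a = 1))
    (hwbar : ∀ t, t < T → ∀ (s : S) (a : A),
      0 < (∑ j : Fin K, wRL p r K π T j t s a) / K)
    (hlo : ∀ t, t < T → 0 < etaLoRL p r K π T t)
    (nk : Fin K → ℕ) (hnk : ∀ k, 0 < nk k) (n : ℕ) (hn : n = ∑ k : Fin K, nk k)
    (hcond : ∀ (k : Fin K) (t : ℕ), t < T → ∀ s : S,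
      Real.sqrt (etaHiRL p r K π T t / etaLoRL p r K π T t) *
          (∑ a : A, π k t s a * Real.sqrt (hq p r (π k) T t s a)) ^ 2
        - (1 - (nk k : ℝ) / (n : ℝ)) * DeltaRL p r K π T k t s
        ≤ ∑ a : A, π k t s a * hq p r (π k) T t s a) :
    ∀ (k : Fin K) (t : ℕ), t < T → ∀ s : S,
      ((nk k : ℝ) / (n : ℝ)) * Vpdis p r (π k) (hmu p r K π T) T t s
        ≤ Vpdis p r (π k) (π k) T t s := by
  have hK0 : (0 : ℝ) < K := by exact_mod_cast hK
  have hn0 : 0 < n := by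
    rw [hn]; exact Finset.sum_pos (fun k _ => hnk k) ⟨⟨0, hK⟩, Finset.mem_univ _⟩
  have hn0' : (0 : ℝ) < n := by exact_mod_cast hn0
  -- positivity of the weight sums
  have hWpos : ∀ t, t < T → ∀ s a, 0 < ∑ j : Fin K, wRL p r K π T j t s a := by
    intro t ht s a
    have h1 := mul_pos (hwbar t ht s a) hK0
    rwa [div_mul_cancel₀ _ hK0.ne'] at h1
  have hwpos : ∀ (k : Fin K) t, t < T → ∀ s a, 0 < wRL p r K π T k t s a := by
    intro k t ht s a
    have hη : 0 < etaRL p r K π T k t s a :=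
      lt_of_lt_of_le (hlo t ht) (ciInf_le (Finite.bddBelow_range _) (⟨k, s, a⟩ : Fin K × S × A))
    have h2 := mul_pos hη (hwbar t ht s a)
    rw [etaRL, div_mul_cancel₀ _ (hwbar t ht s a).ne'] at h2
    exact h2
  have hqpos : ∀ (k : Fin K) t, t < T → ∀ s a, 0 < hq p r (π k) T t s a := by
    intro k t ht s a
    have hw := hwpos k t ht s a
    simp only [wRL] at hw
    nlinarith [sq_nonneg (π k t s a)]
  -- hmu facts
  have hDpos : ∀ t, t < T → ∀ s : S,
      0 < ∑ b : A, Real.sqrt (∑ k : Fin K, π k t s b ^ 2 * hq p r (π k) T t s b) := by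
    intro t ht s
    refine Finset.sum_pos (fun b _ => Real.sqrt_pos.2 ?_) Finset.univ_nonempty
    have := hWpos t ht s b
    simpa only [wRL] using this
  have hmu_eq : ∀ t, t < T → ∀ s a, hmu p r K π T t s a =
      Real.sqrt (∑ k : Fin K, π k t s a ^ 2 * hq p r (π k) T t s a) /
        ∑ b : A, Real.sqrt (∑ k : Fin K, π k t s b ^ 2 * hq p r (π k) T t s b) := by
    intro t ht s a
    rw [hmu, if_neg (hDpos t ht s).ne']
  have hmupos : ∀ t, t < T → ∀ s a, 0 < hmu p r K π T t s a := by
    intro t ht s a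
    rw [hmu_eq t ht s a]
    refine div_pos (Real.sqrt_pos.2 ?_) (hDpos t ht s)
    have := hWpos t ht s a
    simpa only [wRL] using this
  have hmu1 : ∀ i (s : S), i < T → ∑ a : A, hmu p r K π T i s a = 1 := by
    intro i s hi
    rw [Finset.sum_congr rfl fun a _ => hmu_eq i hi s a, ← Finset.sum_div,
      div_self (hDpos i hi s).ne']
  have hπ0 : ∀ (k : Fin K) i (s : S) a, i < T → 0 ≤ π k i s a :=
    fun k i s a hi => (hπ k i s hi).1 a
  have hπ1 : ∀ (k : Fin K) i (s : S), i < T → ∑ a : A, π k i s a = 1 :=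
    fun k i s hi => (hπ k i s hi).2
  have hsuppμ : ∀ (k : Fin K) i (s : S) a, i < T →
      hmu p r K π T i s a = 0 → π k i s a = 0 :=
    fun k i s a hi h0 => absurd h0 (hmupos i hi s a).ne'
  -- the key inequality
  have hkey : ∀ (k : Fin K) t, t < T → ∀ s : S,
      (∑ a : A, hmu p r K π T t s a * (π k t s a / hmu p r K π T t s a) ^ 2 *
        hq p r (π k) T t s a)
      ≤ Real.sqrt (etaHiRL p r K π T t / etaLoRL p r K π T t) *
          (∑ a : A, π k t s a * Real.sqrt (hq p r (π k) T t s a)) ^ 2 := by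
    intro k t ht s
    set W : A → ℝ := fun a => ∑ j : Fin K, π j t s a ^ 2 * hq p r (π j) T t s a with hWdef
    set D : ℝ := ∑ b : A, Real.sqrt (W b) with hDdef
    have hWp : ∀ a, 0 < W a := by
      intro a; have := hWpos t ht s a; simpa only [wRL, hWdef] using this
    have hDp : 0 < D := hDpos t ht s
    set w : A → ℝ := fun a => π k t s a ^ 2 * hq p r (π k) T t s a with hwdef
    have hwp : ∀ a, 0 < w a := by
      intro a; have := hwpos k t ht s a; simpa only [wRL, hwdef] using this
    have hη : ∀ a, etaRL p r K π T k t s a = w a / (W a / K) := fun a => rfl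
    have hηLo : ∀ a, etaLoRL p r K π T t ≤ etaRL p r K π T k t s a := by
      intro a
      exact ciInf_le (Finite.bddBelow_range
        (fun x : Fin K × S × A => etaRL p r K π T x.1 t x.2.1 x.2.2))
        (⟨k, s, a⟩ : Fin K × S × A)
    have hηHi : ∀ a, etaRL p r K π T k t s a ≤ etaHiRL p r K π T t := by
      intro a
      exact le_ciSup (Finite.bddAbove_range
        (fun x : Fin K × S × A => etaRL p r K π T x.1 t x.2.1 x.2.2))
        (⟨k, s, a⟩ : Fin K × S × A)
    have hLo0 : 0 < etaLoRL p r K π T t := hlo t ht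
    have hHi0 : 0 < etaHiRL p r K π T t :=
      lt_of_lt_of_le hLo0 (le_trans (hηLo Classical.ofNonempty) (hηHi Classical.ofNonempty))
    set G : ℝ := ∑ a : A, π k t s a * Real.sqrt (hq p r (π k) T t s a) with hGdef
    have hsw : ∀ a, Real.sqrt (w a) = π k t s a * Real.sqrt (hq p r (π k) T t s a) := by
      intro a
      rw [hwdef]
      rw [Real.sqrt_mul (sq_nonneg _), Real.sqrt_sq (hπ0 k t s a ht)]
    have hG0 : 0 ≤ G := by
      rw [hGdef]
      exact Finset.sum_nonneg fun a _ =>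
        mul_nonneg (hπ0 k t s a ht) (Real.sqrt_nonneg _)
    -- rewrite the LHS
    have hlhs : (∑ a : A, hmu p r K π T t s a * (π k t s a / hmu p r K π T t s a) ^ 2 *
        hq p r (π k) T t s a) = D * ∑ a : A, w a / Real.sqrt (W a) := by
      rw [Finset.mul_sum]
      refine Finset.sum_congr rfl fun a _ => ?_
      rw [hmu_eq t ht s a, show (∑ j : Fin K, π j t s a ^ 2 * hq p r (π j) T t s a) = W a from rfl,
        show (∑ b : A, Real.sqrt (∑ j : Fin K, π j t s b ^ 2 * hq p r (π j) T t s b)) = D from rfl,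
        show w a = π k t s a ^ 2 * hq p r (π k) T t s a from rfl]
      have hWa : Real.sqrt (W a) ≠ 0 := (Real.sqrt_pos.2 (hWp a)).ne'
      field_simp
    rw [hlhs]
    -- termwise bounds
    have hb1 : ∀ a, w a / Real.sqrt (W a) ≤
        Real.sqrt (etaHiRL p r K π T t / K) * Real.sqrt (w a) := by
      intro a
      have h1 : w a / Real.sqrt (W a) = Real.sqrt (w a) * Real.sqrt (w a / W a) := by
        rw [Real.sqrt_div (hwp a).le, ← mul_div_assoc, Real.mul_self_sqrt (hwp a).le]
      have h2 : w a / W a ≤ etaHiRL p r K π T t / K := by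
        have h4 : w a / (W a / ↑K) ≤ etaHiRL p r K π T t := by
          rw [← hη a]; exact hηHi a
        have h5 : w a / (W a / ↑K) / ↑K = w a / W a := by
          rw [div_div, div_mul_cancel₀ _ hK0.ne']
        rw [← h5]
        gcongr
      calc w a / Real.sqrt (W a) = Real.sqrt (w a) * Real.sqrt (w a / W a) := h1
        _ ≤ Real.sqrt (w a) * Real.sqrt (etaHiRL p r K π T t / K) :=
            mul_le_mul_of_nonneg_left (Real.sqrt_le_sqrt h2) (Real.sqrt_nonneg _)
        _ = Real.sqrt (etaHiRL p r K π T t / K) * Real.sqrt (w a) := by ring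
    have hb2 : ∀ a, Real.sqrt (W a) ≤
        Real.sqrt (K / etaLoRL p r K π T t) * Real.sqrt (w a) := by
      intro a
      have h2 : W a ≤ K / etaLoRL p r K π T t * w a := by
        have h3 : etaLoRL p r K π T t ≤ K * w a / W a := by
          have h6 := hηLo a
          rw [hη a, div_div_eq_mul_div, mul_comm] at h6
          exact h6
        rw [div_mul_eq_mul_div, le_div_iff₀ hLo0]
        calc W a * etaLoRL p r K π T t ≤ W a * (K * w a / W a) :=
              mul_le_mul_of_nonneg_left h3 (hWp a).le
          _ = K * w a := by
              have hWne := (hWp a).ne'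
              field_simp
      calc Real.sqrt (W a) ≤ Real.sqrt (K / etaLoRL p r K π T t * w a) :=
            Real.sqrt_le_sqrt h2
        _ = Real.sqrt (K / etaLoRL p r K π T t) * Real.sqrt (w a) :=
            Real.sqrt_mul (by positivity) _
    have hS1 : (∑ a : A, w a / Real.sqrt (W a)) ≤
        Real.sqrt (etaHiRL p r K π T t / K) * G := by
      calc (∑ a : A, w a / Real.sqrt (W a))
          ≤ ∑ a : A, Real.sqrt (etaHiRL p r K π T t / K) * Real.sqrt (w a) :=
            Finset.sum_le_sum fun a _ => hb1 a
        _ = Real.sqrt (etaHiRL p r K π T t / K) * G := by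
            rw [hGdef, Finset.mul_sum]
            exact Finset.sum_congr rfl fun a _ => by rw [hsw a]
    have hS2 : D ≤ Real.sqrt (K / etaLoRL p r K π T t) * G := by
      calc D ≤ ∑ b : A, Real.sqrt (K / etaLoRL p r K π T t) * Real.sqrt (w b) :=
            Finset.sum_le_sum fun b _ => hb2 b
        _ = Real.sqrt (K / etaLoRL p r K π T t) * G := by
            rw [hGdef, Finset.mul_sum]
            exact Finset.sum_congr rfl fun b _ => by rw [hsw b]
    have hsum0 : 0 ≤ ∑ a : A, w a / Real.sqrt (W a) :=
      Finset.sum_nonneg fun a _ => div_nonneg (hwp a).le (Real.sqrt_nonneg _)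
    calc D * ∑ a : A, w a / Real.sqrt (W a)
        ≤ (Real.sqrt (K / etaLoRL p r K π T t) * G) *
            (Real.sqrt (etaHiRL p r K π T t / K) * G) :=
          mul_le_mul hS2 hS1 hsum0 (by positivity)
      _ = (Real.sqrt (K / etaLoRL p r K π T t) * Real.sqrt (etaHiRL p r K π T t / K)) * G ^ 2 := by
          ring
      _ = Real.sqrt (etaHiRL p r K π T t / etaLoRL p r K π T t) * G ^ 2 := by
          rw [← Real.sqrt_mul (by positivity)]
          congr 1
          field_simp
  -- main induction
  intro k t0 ht0 s0
  set c : ℝ := (nk k : ℝ) / (n : ℝ) with hcdef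
  have hc0 : 0 ≤ c := by positivity
  have hc1 : c ≤ 1 := by
    rw [hcdef, div_le_one hn0']
    exact_mod_cast hn ▸ Finset.single_le_sum (f := fun j => nk j)
      (fun j _ => (hnk j).le) (Finset.mem_univ k)
  have main : ∀ (m t : ℕ), T - t = m → t ≤ T → ∀ s : S,
      c * Vpdis p r (π k) (hmu p r K π T) T t s ≤ Vpdis p r (π k) (π k) T t s := by
    intro m
    induction m with
    | zero =>
      intro t hm ht s
      have hTt : t = T := by omega
      subst hTt
      rw [Vpdis_top, Vpdis_top, mul_zero]
    | succ m ih =>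
      intro t hm htT s
      have ht : t < T := by omega
      have hrecμ := Vpdis_rec p r (π k) (hmu p r K π T) hp1 T hmu1 (hπ1 k)
        (hsuppμ k) t ht s
      have hrecπ := Vpdis_rec p r (π k) (π k) hp1 T (hπ1 k) (hπ1 k)
        (fun _ _ _ _ h => h) t ht s
      rw [hrecμ, hrecπ, sum_onpolicy]
      set v : ℝ := vval p r (π k) T t s with hvdef
      have hv : v = ∑ a : A, π k t s a * qval p r (π k) T t s a :=
        vval_eq_sum_q p r (π k) hp1 T (hπ1 k) t ht s
      -- abbreviations
      set μf : A → ℝ := fun a => hmu p r K π T t s a with hμfdef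
      set πf : A → ℝ := fun a => π k t s a with hπfdef
      set qf : A → ℝ := fun a => qval p r (π k) T t s a with hqfdef
      set νf : A → ℝ := fun a => nuval p r (π k) T t s a with hνfdef
      set hqf : A → ℝ := fun a => hq p r (π k) T t s a with hhqfdef
      have hμρ0 : ∀ a, 0 ≤ μf a * (πf a / μf a) ^ 2 := fun a =>
        mul_nonneg (hmupos t ht s a).le (sq_nonneg _)
      -- Step 0: push c inside
      have e0 : c * (∑ a : A, μf a * (πf a / μf a) ^ 2 *
            (qf a ^ 2 + νf a + ∑ s' : S, p s a s' *
              Vpdis p r (π k) (hmu p r K π T) T (t + 1) s'))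
          = ∑ a : A, μf a * (πf a / μf a) ^ 2 *
            (c * (qf a ^ 2 + νf a) + ∑ s' : S, p s a s' *
              (c * Vpdis p r (π k) (hmu p r K π T) T (t + 1) s')) := by
        rw [Finset.mul_sum]
        refine Finset.sum_congr rfl fun a _ => ?_
        rw [show (∑ s' : S, p s a s' *
            (c * Vpdis p r (π k) (hmu p r K π T) T (t + 1) s'))
          = c * ∑ s' : S, p s a s' * Vpdis p r (π k) (hmu p r K π T) T (t + 1) s' by
            rw [Finset.mul_sum]; exact Finset.sum_congr rfl fun s' _ => by ring]
        ring
      -- Step 1: apply the induction hypothesis termwise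
      have e1 : (∑ a : A, μf a * (πf a / μf a) ^ 2 *
            (c * (qf a ^ 2 + νf a) + ∑ s' : S, p s a s' *
              (c * Vpdis p r (π k) (hmu p r K π T) T (t + 1) s')))
          ≤ ∑ a : A, μf a * (πf a / μf a) ^ 2 *
            (c * (qf a ^ 2 + νf a) + ∑ s' : S, p s a s' *
              Vpdis p r (π k) (π k) T (t + 1) s') := by
        refine Finset.sum_le_sum fun a _ => ?_
        refine mul_le_mul_of_nonneg_left ?_ (hμρ0 a)
        refine add_le_add le_rfl (Finset.sum_le_sum fun s' _ => ?_)
        exact mul_le_mul_of_nonneg_left (ih (t + 1) (by omega) (by omega) s')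
          (hp0 s a s')
      -- Step 2: reorganize
      have e2 : (∑ a : A, μf a * (πf a / μf a) ^ 2 *
            (c * (qf a ^ 2 + νf a) + ∑ s' : S, p s a s' *
              Vpdis p r (π k) (π k) T (t + 1) s'))
          = (∑ a : A, μf a * (πf a / μf a) ^ 2 * hqf a)
            - (1 - c) * ∑ a : A, μf a * (πf a / μf a) ^ 2 * (qf a ^ 2 + νf a) := by
        rw [Finset.mul_sum, ← Finset.sum_sub_distrib]
        refine Finset.sum_congr rfl fun a _ => ?_
        rw [show hqf a = qf a ^ 2 + νf a + ∑ s' : S, p s a s' *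
            Vpdis p r (π k) (π k) T (t + 1) s' from hq_eq p r (π k) T t ht s a]
        ring
      -- Delta identity
      have eΔ : (∑ a : A, μf a * (πf a / μf a) ^ 2 * (qf a ^ 2 + νf a))
          = DeltaRL p r K π T k t s + v ^ 2 := by
        simp only [DeltaRL, ← hμfdef, ← hπfdef, ← hqfdef, ← hνfdef]
        have t1 : (∑ a : A, μf a * (πf a / μf a * qf a)) = ∑ a : A, πf a * qf a := by
          refine Finset.sum_congr rfl fun a _ => ?_
          have : μf a ≠ 0 := (hmupos t ht s a).ne'
          field_simp
        have t2 : (∑ a : A, μf a * (πf a / μf a) ^ 2 * (qf a ^ 2 + νf a))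
            = (∑ a : A, μf a * ((πf a / μf a) ^ 2 * νf a))
              + ∑ a : A, μf a * (πf a / μf a * qf a) ^ 2 := by
          rw [← Finset.sum_add_distrib]
          exact Finset.sum_congr rfl fun a _ => by ring
        rw [t2, t1, hv]
        ring
      -- hq sum identity for the RHS
      have eπ : (∑ a : A, πf a * hqf a)
          = ∑ a : A, πf a * (qf a ^ 2 + νf a + ∑ s' : S, p s a s' *
              Vpdis p r (π k) (π k) T (t + 1) s') := by
        refine Finset.sum_congr rfl fun a _ => ?_
        rw [show hqf a = qf a ^ 2 + νf a + ∑ s' : S, p s a s' *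
            Vpdis p r (π k) (π k) T (t + 1) s' from hq_eq p r (π k) T t ht s a]
      have hkey' := hkey k t ht s
      have hcond' := hcond k t ht s
      rw [← hcdef] at hcond'
      -- assemble
      calc c * ((∑ a : A, μf a * (πf a / μf a) ^ 2 *
            (qf a ^ 2 + νf a + ∑ s' : S, p s a s' *
              Vpdis p r (π k) (hmu p r K π T) T (t + 1) s')) - v ^ 2)
          = (∑ a : A, μf a * (πf a / μf a) ^ 2 *
            (c * (qf a ^ 2 + νf a) + ∑ s' : S, p s a s' *
              (c * Vpdis p r (π k) (hmu p r K π T) T (t + 1) s'))) - c * v ^ 2 := by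
            rw [mul_sub, e0]
        _ ≤ (∑ a : A, μf a * (πf a / μf a) ^ 2 *
            (c * (qf a ^ 2 + νf a) + ∑ s' : S, p s a s' *
              Vpdis p r (π k) (π k) T (t + 1) s')) - c * v ^ 2 := by
            linarith [e1]
        _ = (∑ a : A, μf a * (πf a / μf a) ^ 2 * hqf a)
            - (1 - c) * (DeltaRL p r K π T k t s + v ^ 2) - c * v ^ 2 := by
            rw [e2, eΔ]
        _ = (∑ a : A, μf a * (πf a / μf a) ^ 2 * hqf a)
            - (1 - c) * DeltaRL p r K π T k t s - v ^ 2 := by ring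
        _ ≤ Real.sqrt (etaHiRL p r K π T t / etaLoRL p r K π T t) *
              (∑ a : A, πf a * Real.sqrt (hqf a)) ^ 2
            - (1 - c) * DeltaRL p r K π T k t s - v ^ 2 := by
            linarith [hkey']
        _ ≤ (∑ a : A, πf a * hqf a) - v ^ 2 := by
            linarith [hcond']
        _ = (∑ a : A, πf a * (qf a ^ 2 + νf a + ∑ s' : S, p s a s' *
              Vpdis p r (π k) (π k) T (t + 1) s')) - v ^ 2 := by
            rw [eπ]
  exact main (T - t0) t0 rfl (by omega) s0
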